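/- Let p be a nonzero polynomial with real coefficients and positive leading coefficient such that every complex root of p has negative real part. Then every coefficient of p in degrees 0, 1, …, deg p is positive. -/

import Mathlib

open Polynomial

private lemma prod_pos_coeff (d q : Polynomial ℝ) (hd0 : d ≠ 0) (hq0 : q ≠ 0)
    (hd : ∀ i ≤ d.natDegree, 0 < d.coeff i) (hq : ∀ i ≤ q.natDegree, 0 < q.coeff i) :
    ∀ k ≤ (d * q).natDegree, 0 < (d * q).coeff k := by
  have hd' : ∀ i, 0 ≤ d.coeff i := fun i => by
    by_cases h : i ≤ d.natDegree
    · exact (hd i h).le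
    · simp [coeff_eq_zero_of_natDegree_lt (not_le.mp h)]
  have hq' : ∀ i, 0 ≤ q.coeff i := fun i => by
    by_cases h : i ≤ q.natDegree
    · exact (hq i h).le
    · simp [coeff_eq_zero_of_natDegree_lt (not_le.mp h)]
  intro k hk
  rw [natDegree_mul hd0 hq0] at hk
  rw [coeff_mul]
  apply Finset.sum_pos'
  · rintro ⟨i, j⟩ -
    exact mul_nonneg (hd' i) (hq' j)
  · by_cases h : k ≤ q.natDegree
    · exact ⟨(0, k), Finset.HasAntidiagonal.mem_antidiagonal.2 (zero_add k),
        mul_pos (hd 0 (Nat.zero_le _)) (hq k h)⟩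
    · push_neg at h
      exact ⟨(k - q.natDegree, q.natDegree), Finset.HasAntidiagonal.mem_antidiagonal.2 (by omega),
        mul_pos (hd _ (by omega)) (hq _ le_rfl)⟩

private lemma quad_deg (b c : ℝ) : (X ^ 2 - C b * X + C c : Polynomial ℝ).natDegree = 2 := by
  compute_degree!

private lemma quad_c0 (b c : ℝ) : (X ^ 2 - C b * X + C c : Polynomial ℝ).coeff 0 = c := by
  simp [coeff_C]

private lemma quad_c1 (b c : ℝ) : (X ^ 2 - C b * X + C c : Polynomial ℝ).coeff 1 = -b := by
  simp [coeff_C]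

private lemma quad_c2 (b c : ℝ) : (X ^ 2 - C b * X + C c : Polynomial ℝ).coeff 2 = 1 := by
  simp [coeff_C]

private lemma main_aux : ∀ n : ℕ, ∀ p : Polynomial ℝ, p.natDegree = n → p ≠ 0 →
    0 < p.leadingCoeff →
    (∀ z : ℂ, (p.map (algebraMap ℝ ℂ)).IsRoot z → z.re < 0) →
    ∀ k ≤ p.natDegree, 0 < p.coeff k := by
  intro n
  induction n using Nat.strong_induction_on with
  | _ n ih =>
  intro p hn hp hl hroots k hk
  by_cases h0 : p.natDegree = 0
  · have hk0 : k = 0 := by omega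
    subst hk0
    have : p.coeff 0 = p.leadingCoeff := by
      rw [Polynomial.leadingCoeff, h0]
    rw [this]; exact hl
  · -- there is a complex root
    have hdegpos : 0 < (p.map (algebraMap ℝ ℂ)).degree := by
      rw [Polynomial.degree_map_eq_of_injective (algebraMap ℝ ℂ).injective]
      exact Polynomial.natDegree_pos_iff_degree_pos.1 (Nat.pos_of_ne_zero h0)
    obtain ⟨z, hz⟩ := Complex.exists_root hdegpos
    have hzre : z.re < 0 := hroots z hz
    have haev : Polynomial.aeval z p = 0 := by
      rw [Polynomial.aeval_def, ← Polynomial.eval_map]; exact hz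
    -- obtain a monic factor d with positive coefficients and positive degree
    obtain ⟨d, hdvd, hdne, hddeg, hdmonic, hdcoeff⟩ :
        ∃ d : Polynomial ℝ, d ∣ p ∧ d ≠ 0 ∧ 0 < d.natDegree ∧ d.Monic ∧
          ∀ i ≤ d.natDegree, 0 < d.coeff i := by
      by_cases him : z.im = 0
      · -- real root
        refine ⟨X - C z.re, ?_, X_sub_C_ne_zero z.re, by simp, monic_X_sub_C z.re, ?_⟩
        · rw [Polynomial.dvd_iff_isRoot]
          have hzr : z = (algebraMap ℝ ℂ) z.re := by
            apply Complex.ext <;> simp [him]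
          have : (algebraMap ℝ ℂ) (p.eval z.re) = 0 := by
            rw [← Polynomial.eval₂_at_apply, ← hzr, ← Polynomial.aeval_def]
            exact haev
          exact (map_eq_zero_iff _ (algebraMap ℝ ℂ).injective).1 this
        · intro i hi
          rw [natDegree_X_sub_C] at hi
          interval_cases i <;> simp [coeff_X_zero, coeff_X_one]
          · linarith
      · -- nonreal root: quadratic factor
        refine ⟨X ^ 2 - C (2 * z.re) * X + C (‖z‖ ^ 2), 
          p.quadratic_dvd_of_aeval_eq_zero_im_ne_zero haev him, ?_, ?_, ?_, ?_⟩
        all_goals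
          have hdeg2 := quad_deg (2 * z.re) (‖z‖ ^ 2)
        · intro h; rw [h] at hdeg2; simp at hdeg2
        · omega
        · unfold Polynomial.Monic Polynomial.leadingCoeff
          rw [hdeg2, quad_c2]
        · intro i hi
          rw [hdeg2] at hi
          have hz0 : z ≠ 0 := fun h => by simp [h] at hzre
          have hnorm : 0 < ‖z‖ ^ 2 := pow_pos (norm_pos_iff.mpr hz0) 2
          interval_cases i
          · rw [quad_c0]; exact hnorm
          · rw [quad_c1]; linarith
          · rw [quad_c2]; norm_num
    obtain ⟨q, hq⟩ := hdvd
    have hqne : q ≠ 0 := by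
      intro h; rw [h, mul_zero] at hq; exact hp hq
    have hdegs : p.natDegree = d.natDegree + q.natDegree := by
      rw [hq, natDegree_mul hdne hqne]
    have hqlc : 0 < q.leadingCoeff := by
      have : p.leadingCoeff = d.leadingCoeff * q.leadingCoeff := by
        rw [hq, leadingCoeff_mul]
      rw [this, hdmonic.leadingCoeff, one_mul] at hl
      exact hl
    have hqroots : ∀ z : ℂ, (q.map (algebraMap ℝ ℂ)).IsRoot z → z.re < 0 := by
      intro w hw
      apply hroots w
      rw [hq, Polynomial.IsRoot, Polynomial.map_mul, eval_mul, hw, mul_zero]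
    have hqdeg : q.natDegree < n := by omega
    have hqpos := ih q.natDegree hqdeg q rfl hqne hqlc hqroots
    rw [hq]
    exact prod_pos_coeff d q hdne hqne hdcoeff hqpos k (by rw [← hq]; exact hk)

/-- A nonzero real polynomial with positive leading coefficient all of whose complex roots
have negative real part has positive coefficients in all degrees up to its degree. -/
theorem stmt_2 (p : Polynomial ℝ) (hp : p ≠ 0) (hl : 0 < p.leadingCoeff)
    (hroots : ∀ z : ℂ, (p.map (algebraMap ℝ ℂ)).IsRoot z → z.re < 0) :
    ∀ k ≤ p.natDegree, 0 < p.coeff k := by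
  exact main_aux p.natDegree p rfl hp hl hroots
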